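/- Assume Σ_{n=2}^∞ Ξ(n)·aₙ ≤ (A−B)(1−γ), that Ξ(2) > 0, and that Ξ(n) ≥ Ξ(2) for all n ≥ 2. Let δ > 0 and define ℱ(z) = z − Σ_{n=2}^∞ (Γ(μn+1)Γ(2+δ)/Γ(μn+1+δ)) aₙ z^{μn} (so that ℱ(z) = Γ(2+δ) z^{−δ} · I_z^δ F_μ(z), the normalized Srivastava–Owa fractional integral of F_μ of order δ). Set K = (Γ(2μ+1)Γ(2+δ)/Γ(2μ+1+δ)) · (A−B)(1−γ)/Ξ(2). Then for every z ∈ 𝕌, |z| − K·|z|^{2μ} ≤ |ℱ(z)| ≤ |z| + K·|z|^{2μ}. -/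

import Mathlib

open Complex

/-- `Ξ(n) = (1−B)((μn)^k ϑₙ − (μn)^m λₙ) + (A−B)(1−γ)(μn)^m λₙ`. -/
noncomputable def Xi (μ A B γ : ℝ) (k m : ℕ) (ϑ lam : ℕ → ℝ) (n : ℕ) : ℝ :=
  (1 - B) * ((μ * n) ^ k * ϑ n - (μ * n) ^ m * lam n) +
    (A - B) * (1 - γ) * ((μ * n) ^ m * lam n)


/-- The normalized Srivastava–Owa fractional integral of `F_μ` of order `δ`:
`ℱ(z) = Γ(2+δ) z^{−δ} I_z^δ F_μ(z) = z − Σ_{n≥2} (Γ(μn+1)Γ(2+δ)/Γ(μn+1+δ)) aₙ z^{μn}`. -/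
noncomputable def fracIntF (μ δ : ℝ) (a : ℕ → ℝ) (z : ℂ) : ℂ :=
  z - ∑' n : ℕ,
    ((Real.Gamma (μ * (n + 2 : ℕ) + 1) * Real.Gamma (2 + δ) /
        Real.Gamma (μ * (n + 2 : ℕ) + 1 + δ) * a (n + 2) : ℝ) : ℂ) *
      z ^ ((μ * (n + 2 : ℕ) : ℝ) : ℂ)

/-- Log-convexity of `Γ` gives `Γ(a+d)Γ(b) ≤ Γ(a)Γ(b+d)` for `0 < a ≤ b`, `0 ≤ d`. -/
lemma gamma_cross (a b d : ℝ) (ha : 0 < a) (hab : a ≤ b) (hd : 0 ≤ d) :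
    Real.Gamma (a + d) * Real.Gamma b ≤ Real.Gamma a * Real.Gamma (b + d) := by
  rcases eq_or_lt_of_le hd with h0 | hd0
  · rw [← h0, add_zero, add_zero, mul_comm]
  rcases eq_or_lt_of_le hab with h1 | hab0
  · subst h1; rw [mul_comm]
  have hb : 0 < b := lt_of_lt_of_le ha hab
  have hden : 0 < b + d - a := by linarith
  set s := (b - a) / (b + d - a) with hsdef
  set t := d / (b + d - a) with htdef
  have hs : 0 ≤ s := div_nonneg (by linarith) hden.le
  have ht : 0 ≤ t := div_nonneg hd hden.le
  have hst : s + t = 1 := by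
    rw [hsdef, htdef, ← add_div, div_eq_one_iff_eq hden.ne']
    ring
  have hc := Real.convexOn_log_Gamma
  have h1 := hc.2 (Set.mem_Ioi.mpr ha) (Set.mem_Ioi.mpr (by linarith : (0:ℝ) < b + d)) hs ht hst
  have h2 := hc.2 (Set.mem_Ioi.mpr ha) (Set.mem_Ioi.mpr (by linarith : (0:ℝ) < b + d)) ht hs
    (by linarith)
  have e1 : s • a + t • (b + d) = a + d := by
    rw [smul_eq_mul, smul_eq_mul, hsdef, htdef, div_mul_eq_mul_div, div_mul_eq_mul_div, ← add_div,
      div_eq_iff hden.ne']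
    ring
  have e2 : t • a + s • (b + d) = b := by
    rw [smul_eq_mul, smul_eq_mul, hsdef, htdef, div_mul_eq_mul_div, div_mul_eq_mul_div, ← add_div,
      div_eq_iff hden.ne']
    ring
  rw [e1] at h1
  rw [e2] at h2
  simp only [Function.comp_apply, smul_eq_mul] at h1 h2
  have hsum : Real.log (Real.Gamma (a + d)) + Real.log (Real.Gamma b) ≤
      Real.log (Real.Gamma a) + Real.log (Real.Gamma (b + d)) := by
    have hadd := add_le_add h1 h2
    have hre : s * Real.log (Real.Gamma a) + t * Real.log (Real.Gamma (b + d)) +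
        (t * Real.log (Real.Gamma a) + s * Real.log (Real.Gamma (b + d))) =
        (s + t) * (Real.log (Real.Gamma a) + Real.log (Real.Gamma (b + d))) := by ring
    rw [hre, hst, one_mul] at hadd
    linarith
  have hG1 : 0 < Real.Gamma (a + d) := Real.Gamma_pos_of_pos (by linarith)
  have hG2 : 0 < Real.Gamma b := Real.Gamma_pos_of_pos hb
  have hG3 : 0 < Real.Gamma a := Real.Gamma_pos_of_pos ha
  have hG4 : 0 < Real.Gamma (b + d) := Real.Gamma_pos_of_pos (by linarith)
  have := Real.exp_le_exp.mpr hsum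
  rwa [Real.exp_add, Real.exp_add, Real.exp_log hG1, Real.exp_log hG2, Real.exp_log hG3,
    Real.exp_log hG4] at this

/-- distortion theorem for the fractional integral, Theorem 3.1 of the
paper: if `Σ_{n≥2} Ξ(n)aₙ ≤ (A−B)(1−γ)`, `Ξ(2) > 0`, `Ξ(n) ≥ Ξ(2)` for `n ≥ 2` and
`δ > 0`, then with `K = (Γ(2μ+1)Γ(2+δ)/Γ(2μ+1+δ))·(A−B)(1−γ)/Ξ(2)` one has
`|z| − K|z|^{2μ} ≤ |ℱ(z)| ≤ |z| + K|z|^{2μ}` on 𝕌. -/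
theorem stmt14 (μ A B γ δ : ℝ) (k m : ℕ) (a ϑ lam : ℕ → ℝ)
    (hμ : 1 ≤ μ) (hkm : m ≤ k)
    (hB : -1 ≤ B) (hBA : B < A) (hA : A ≤ 1) (hB0 : B < 0)
    (hγ0 : 0 ≤ γ) (hγ1 : γ < 1) (hδ : 0 < δ)
    (ha : ∀ n, 2 ≤ n → 0 ≤ a n)
    (hlam : ∀ n, 2 ≤ n → 0 ≤ lam n) (hϑ : ∀ n, 2 ≤ n → lam n ≤ ϑ n)
    (hsum : Summable fun n : ℕ => Xi μ A B γ k m ϑ lam (n + 2) * a (n + 2))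
    (hle : (∑' n : ℕ, Xi μ A B γ k m ϑ lam (n + 2) * a (n + 2)) ≤ (A - B) * (1 - γ))
    (hXi2 : 0 < Xi μ A B γ k m ϑ lam 2)
    (hmono : ∀ n, 2 ≤ n → Xi μ A B γ k m ϑ lam 2 ≤ Xi μ A B γ k m ϑ lam n) :
    ∀ z : ℂ, ‖z‖ < 1 →
      ‖z‖ -
          Real.Gamma (2 * μ + 1) * Real.Gamma (2 + δ) / Real.Gamma (2 * μ + 1 + δ) *
            ((A - B) * (1 - γ) / Xi μ A B γ k m ϑ lam 2) * ‖z‖ ^ (2 * μ) ≤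
        ‖fracIntF μ δ a z‖ ∧
      ‖fracIntF μ δ a z‖ ≤
        ‖z‖ +
          Real.Gamma (2 * μ + 1) * Real.Gamma (2 + δ) / Real.Gamma (2 * μ + 1 + δ) *
            ((A - B) * (1 - γ) / Xi μ A B γ k m ϑ lam 2) * ‖z‖ ^ (2 * μ) := by
  intro z hz
  set Ξ2 := Xi μ A B γ k m ϑ lam 2 with hΞ2def
  have hC : 0 < (A - B) * (1 - γ) := mul_pos (by linarith) (by linarith)
  have hanneg : ∀ n : ℕ, 0 ≤ a (n + 2) := fun n => ha _ (by omega)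
  have hXin : ∀ n : ℕ, Ξ2 ≤ Xi μ A B γ k m ϑ lam (n + 2) := fun n => hmono _ (by omega)
  -- a is summable and its sum is bounded
  have hbnd : ∀ n : ℕ, a (n + 2) ≤ Xi μ A B γ k m ϑ lam (n + 2) * a (n + 2) / Ξ2 := by
    intro n
    rw [le_div_iff₀ hXi2]
    nlinarith [hXin n, hanneg n]
  have hsumdiv : Summable (fun n : ℕ => Xi μ A B γ k m ϑ lam (n + 2) * a (n + 2) / Ξ2) :=
    hsum.div_const Ξ2
  have hsa : Summable (fun n : ℕ => a (n + 2)) :=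
    Summable.of_nonneg_of_le hanneg hbnd hsumdiv
  have htsa : (∑' n : ℕ, a (n + 2)) ≤ (A - B) * (1 - γ) / Ξ2 := by
    calc (∑' n : ℕ, a (n + 2)) ≤ ∑' n : ℕ, Xi μ A B γ k m ϑ lam (n + 2) * a (n + 2) / Ξ2 :=
          Summable.tsum_le_tsum hbnd hsa hsumdiv
      _ = (∑' n : ℕ, Xi μ A B γ k m ϑ lam (n + 2) * a (n + 2)) / Ξ2 := by
          rw [tsum_div_const]
      _ ≤ (A - B) * (1 - γ) / Ξ2 := by
          gcongr
  -- coefficient bounds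
  set K0 := Real.Gamma (2 * μ + 1) * Real.Gamma (2 + δ) / Real.Gamma (2 * μ + 1 + δ) with hK0def
  have hμ0 : (0:ℝ) < μ := by linarith
  have hGa : 0 < Real.Gamma (2 * μ + 1) := Real.Gamma_pos_of_pos (by linarith)
  have hGad : 0 < Real.Gamma (2 * μ + 1 + δ) := Real.Gamma_pos_of_pos (by linarith)
  have hG2d : 0 < Real.Gamma (2 + δ) := Real.Gamma_pos_of_pos (by linarith)
  have hK0pos : 0 < K0 := by positivity
  set c : ℕ → ℝ := fun n => Real.Gamma (μ * (n + 2 : ℕ) + 1) * Real.Gamma (2 + δ) /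
      Real.Gamma (μ * (n + 2 : ℕ) + 1 + δ) with hcdef
  have hn2 : ∀ n : ℕ, 2 * μ ≤ μ * ((n + 2 : ℕ) : ℝ) := by
    intro n
    push_cast
    nlinarith [Nat.cast_nonneg (α := ℝ) n]
  have hGb : ∀ n : ℕ, 0 < Real.Gamma (μ * (n + 2 : ℕ) + 1) := by
    intro n; exact Real.Gamma_pos_of_pos (by nlinarith [hn2 n])
  have hGbd : ∀ n : ℕ, 0 < Real.Gamma (μ * (n + 2 : ℕ) + 1 + δ) := by
    intro n; exact Real.Gamma_pos_of_pos (by nlinarith [hn2 n])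
  have hcle : ∀ n : ℕ, c n ≤ K0 := by
    intro n
    have hcross := gamma_cross (2 * μ + 1) (μ * (n + 2 : ℕ) + 1) δ (by linarith)
      (by linarith [hn2 n]) hδ.le
    rw [hcdef, hK0def, div_le_div_iff₀ (hGbd n) hGad]
    nlinarith [hG2d, hcross, hGa, hGb n, hGad, hGbd n]
  have hcpos : ∀ n : ℕ, 0 ≤ c n := fun n => le_of_lt (by
    have := hGb n; have := hGbd n; positivity)
  -- the series term bounds
  set r := ‖z‖ with hrdef
  have hr0 : 0 ≤ r := norm_nonneg z
  have hrpow : ∀ n : ℕ, r ^ (μ * ((n + 2 : ℕ) : ℝ)) ≤ r ^ (2 * μ) := by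
    intro n
    rcases eq_or_lt_of_le hr0 with h | h
    · rw [← h, Real.zero_rpow (by nlinarith [hn2 n] : μ * ((n + 2 : ℕ) : ℝ) ≠ 0),
        Real.zero_rpow (by nlinarith : (2 : ℝ) * μ ≠ 0)]
    · exact Real.rpow_le_rpow_of_exponent_ge h hz.le (hn2 n)
  set T := ∑' n : ℕ, ((c n * a (n + 2) : ℝ) : ℂ) * z ^ ((μ * (n + 2 : ℕ) : ℝ) : ℂ) with hTdef
  have hterm : ∀ n : ℕ, ‖((c n * a (n + 2) : ℝ) : ℂ) * z ^ ((μ * (n + 2 : ℕ) : ℝ) : ℂ)‖ ≤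
      K0 * r ^ (2 * μ) * a (n + 2) := by
    intro n
    rw [norm_mul, Complex.norm_real, Real.norm_eq_abs,
      Complex.norm_cpow_real]
    rw [_root_.abs_of_nonneg (mul_nonneg (hcpos n) (hanneg n))]
    calc c n * a (n + 2) * r ^ (μ * ((n + 2 : ℕ) : ℝ)) ≤
        K0 * a (n + 2) * r ^ (2 * μ) := by
          apply mul_le_mul
          · exact mul_le_mul_of_nonneg_right (hcle n) (hanneg n)
          · exact hrpow n
          · exact Real.rpow_nonneg hr0 _
          · exact mul_nonneg hK0pos.le (hanneg n)
      _ = K0 * r ^ (2 * μ) * a (n + 2) := by ring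
  have hsb : Summable (fun n : ℕ => K0 * r ^ (2 * μ) * a (n + 2)) := hsa.mul_left _
  have hsnorm : Summable (fun n : ℕ =>
      ‖((c n * a (n + 2) : ℝ) : ℂ) * z ^ ((μ * (n + 2 : ℕ) : ℝ) : ℂ)‖) :=
    Summable.of_nonneg_of_le (fun n => norm_nonneg _) hterm hsb
  have hsT : Summable (fun n : ℕ => ((c n * a (n + 2) : ℝ) : ℂ) *
      z ^ ((μ * (n + 2 : ℕ) : ℝ) : ℂ)) := hsnorm.of_norm
  have hTbound : ‖T‖ ≤ K0 * ((A - B) * (1 - γ) / Ξ2) * r ^ (2 * μ) := by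
    calc ‖T‖ ≤ ∑' n : ℕ, ‖((c n * a (n + 2) : ℝ) : ℂ) * z ^ ((μ * (n + 2 : ℕ) : ℝ) : ℂ)‖ :=
          norm_tsum_le_tsum_norm hsnorm
      _ ≤ ∑' n : ℕ, K0 * r ^ (2 * μ) * a (n + 2) := Summable.tsum_le_tsum hterm hsnorm hsb
      _ = K0 * r ^ (2 * μ) * ∑' n : ℕ, a (n + 2) := tsum_mul_left
      _ ≤ K0 * r ^ (2 * μ) * ((A - B) * (1 - γ) / Ξ2) := by
          apply mul_le_mul_of_nonneg_left htsa (by positivity)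
      _ = K0 * ((A - B) * (1 - γ) / Ξ2) * r ^ (2 * μ) := by ring
  have hF : fracIntF μ δ a z = z - T := by
    rw [fracIntF, hTdef, hcdef]
  rw [hF]
  constructor
  · have h1 : ‖z‖ - ‖T‖ ≤ ‖z - T‖ := norm_sub_norm_le z T
    rw [← hrdef] at h1
    linarith
  · have h1 : ‖z - T‖ ≤ ‖z‖ + ‖T‖ := norm_sub_le z T
    rw [← hrdef] at h1
    linarith
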